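/- Assouad's lemma: For each v ∈ {0,1}^d let P_v be a probability distribution for a random variable Y, and define the mixtures P̄_j = 2^{-(d-1)} Σ_{v: v_j=1} P_v and P̄_{-j} = 2^{-(d-1)} Σ_{v: v_j=0} P_v. Let V ~ Uniform({0,1}^d) and, conditional on V = v, draw Y ~ P_v. Then for any estimator v̂ = v̂(Y) ∈ {0,1}^d, E[‖v̂(Y) − V‖₁] ≥ (1/2) Σ_{j=1}^d (1 − TV(P̄_j, P̄_{-j})). -/

import Mathlib

open MeasureTheory Finset ENNReal

/-- Total variation distance between two measures, as a supremum over sets. -/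
noncomputable def tvDist {Ω : Type*} [MeasurableSpace Ω] (P Q : Measure Ω) : ℝ :=
  ⨆ A : Set Ω, |(P A).toReal - (Q A).toReal|

lemma ofReal_sum_le' {ι : Type*} (s : Finset ι) (f : ι → ℝ) :
    ENNReal.ofReal (∑ i ∈ s, f i) ≤ ∑ i ∈ s, ENNReal.ofReal (f i) := by
  induction s using Finset.cons_induction with
  | empty => simp
  | cons a s ha ih =>
    rw [Finset.sum_cons, Finset.sum_cons]
    exact ENNReal.ofReal_add_le.trans (by gcongr)

lemma tv_aux {Ω : Type*} [MeasurableSpace Ω] (μ ν : Measure Ω)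
    (hμ : μ Set.univ = 1) (hν : ν Set.univ = 1) (A : Set Ω) (hA : MeasurableSet A) :
    ENNReal.ofReal (1 - tvDist μ ν) ≤ μ Aᶜ + ν A := by
  have hμt : ∀ B : Set Ω, μ B ≠ ⊤ := fun B =>
    ((measure_mono (Set.subset_univ B)).trans_lt (by rw [hμ]; exact one_lt_top)).ne
  have hνt : ∀ B : Set Ω, ν B ≠ ⊤ := fun B =>
    ((measure_mono (Set.subset_univ B)).trans_lt (by rw [hν]; exact one_lt_top)).ne
  have hμ1 : ∀ B : Set Ω, (μ B).toReal ≤ 1 := by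
    intro B
    have := ENNReal.toReal_mono (by rw [hμ]; exact one_ne_top) (measure_mono (Set.subset_univ B))
    simpa [hμ] using this
  have hν1 : ∀ B : Set Ω, (ν B).toReal ≤ 1 := by
    intro B
    have := ENNReal.toReal_mono (by rw [hν]; exact one_ne_top) (measure_mono (Set.subset_univ B))
    simpa [hν] using this
  have hbdd : BddAbove (Set.range fun B : Set Ω => |(μ B).toReal - (ν B).toReal|) := by
    refine ⟨1, ?_⟩
    rintro x ⟨B, rfl⟩
    rw [abs_sub_le_iff]
    constructor <;> nlinarith [hμ1 B, hν1 B, ENNReal.toReal_nonneg (a := μ B),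
      ENNReal.toReal_nonneg (a := ν B)]
  have ht : (μ A).toReal - (ν A).toReal ≤ tvDist μ ν :=
    (le_abs_self _).trans (le_ciSup hbdd A)
  have hsum : (μ A).toReal + (μ Aᶜ).toReal = 1 := by
    rw [← ENNReal.toReal_add (hμt A) (hμt Aᶜ), measure_add_measure_compl hA, hμ]
    simp
  have hstep : 1 - tvDist μ ν ≤ (μ Aᶜ).toReal + (ν A).toReal := by linarith
  calc ENNReal.ofReal (1 - tvDist μ ν) ≤ ENNReal.ofReal ((μ Aᶜ).toReal + (ν A).toReal) :=
        ENNReal.ofReal_le_ofReal hstep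
    _ = μ Aᶜ + ν A := by
        rw [ENNReal.ofReal_add ENNReal.toReal_nonneg ENNReal.toReal_nonneg,
          ENNReal.ofReal_toReal (hμt Aᶜ), ENNReal.ofReal_toReal (hνt A)]

/-- Assouad's lemma: with `V` uniform on `{0,1}^d` and `Y ~ P_V`, any estimator
`v̂(Y)` satisfies `E‖v̂(Y) − V‖₁ ≥ (1/2)·∑_j (1 − TV(P̄_j, P̄_{-j}))`, where
`P̄_j` (resp. `P̄_{-j}`) averages `P_v` over `v` with `v_j = 1` (resp. `0`). -/
theorem assouad_lemma {Ω : Type*} [MeasurableSpace Ω] (d : ℕ) (hd : 1 ≤ d)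
    (P : (Fin d → Bool) → Measure Ω) (hP : ∀ v, IsProbabilityMeasure (P v))
    (vhat : Ω → (Fin d → Bool)) (hvhat : Measurable vhat) :
    ENNReal.ofReal ((1 / 2) * ∑ j : Fin d,
        (1 - tvDist
          ((2 ^ (d - 1) : ℝ≥0∞)⁻¹ •
            ∑ v ∈ Finset.univ.filter (fun v : Fin d → Bool => v j = true), P v)
          ((2 ^ (d - 1) : ℝ≥0∞)⁻¹ •
            ∑ v ∈ Finset.univ.filter (fun v : Fin d → Bool => v j = false), P v))) ≤
      ∫⁻ p : (Fin d → Bool) × Ω,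
          ((Finset.univ.filter (fun j : Fin d => vhat p.2 j ≠ p.1 j)).card : ℝ≥0∞)
        ∂((2 ^ d : ℝ≥0∞)⁻¹ •
            ∑ v : Fin d → Bool, (Measure.dirac v).prod (P v)) := by
  classical
  -- notation
  set A : Fin d → Set Ω := fun j => {ω | vhat ω j = true} with hA
  have hAmeas : ∀ j, MeasurableSet (A j) := fun j =>
    hvhat ((Set.to_countable _).measurableSet : MeasurableSet {u : Fin d → Bool | u j = true})
  set Q : Fin d → Bool → Measure Ω := fun j b =>
    ∑ v ∈ Finset.univ.filter (fun v : Fin d → Bool => v j = b), P v with hQ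
  -- cardinality of the slices
  have hcard : ∀ (j : Fin d) (b : Bool),
      (Finset.univ.filter (fun v : Fin d → Bool => v j = b)).card = 2 ^ (d - 1) := by
    intro j b
    have hkey : ∀ b : Bool, (Finset.univ.filter (fun v : Fin d → Bool => v j = b)).card =
        (Finset.univ.filter (fun v : Fin d → Bool => v j = !b)).card := by
      intro b
      refine Finset.card_bij' (fun v _ => Function.update v j (!b))
        (fun v _ => Function.update v j b) ?_ ?_ ?_ ?_
      · intro v hv; simp [Function.update_self]
      · intro v hv; simp [Function.update_self]
      · intro v hv
        simp only [Finset.mem_filter, Finset.mem_univ, true_and] at hv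
        show Function.update (Function.update v j (!b)) j b = v
        rw [Function.update_idem, ← hv, Function.update_eq_self]
      · intro v hv
        simp only [Finset.mem_filter, Finset.mem_univ, true_and] at hv
        show Function.update (Function.update v j b) j (!b) = v
        rw [Function.update_idem, ← hv, Function.update_eq_self]
    have htot : (Finset.univ.filter (fun v : Fin d → Bool => v j = true)).card +
        (Finset.univ.filter (fun v : Fin d → Bool => v j = false)).card = 2 ^ d := by
      have := Finset.card_filter_add_card_filter_not
        (s := (Finset.univ : Finset (Fin d → Bool))) (fun v => v j = true)
      simp only [Bool.not_eq_true] at this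
      rw [this, Finset.card_univ]
      simp [Fintype.card_fun]
    have hkeyt := hkey true
    simp only [Bool.not_true] at hkeyt
    have hpow : 2 ^ d = 2 * 2 ^ (d - 1) := by
      conv_lhs => rw [← Nat.sub_add_cancel hd]
      ring
    rw [hpow, ← hkeyt, ← two_mul] at htot
    have hT := Nat.eq_of_mul_eq_mul_left (by norm_num) htot
    cases b
    · rw [← hkeyt]; exact hT
    · exact hT
  -- masses
  have hQmass : ∀ (j : Fin d) (b : Bool), Q j b Set.univ = 2 ^ (d - 1) := by
    intro j b
    rw [hQ]
    simp only [Measure.finset_sum_apply]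
    have : ∀ v ∈ Finset.univ.filter (fun v : Fin d → Bool => v j = b), P v Set.univ = 1 := by
      intro v _; haveI := hP v; simp
    rw [Finset.sum_congr rfl this, Finset.sum_const, hcard j b]
    simp
  have hpow_ne_zero : (2 ^ (d - 1) : ℝ≥0∞) ≠ 0 := by positivity
  have hpow_ne_top : (2 ^ (d - 1) : ℝ≥0∞) ≠ ⊤ := by
    exact (pow_lt_top (by norm_num : (2 : ℝ≥0∞) < ⊤)).ne
  have hQbar : ∀ (j : Fin d) (b : Bool),
      ((2 ^ (d - 1) : ℝ≥0∞)⁻¹ • Q j b) Set.univ = 1 := by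
    intro j b
    rw [Measure.smul_apply, smul_eq_mul, hQmass, ENNReal.inv_mul_cancel hpow_ne_zero hpow_ne_top]
  -- measurability of the count function
  have hF : Measurable (fun p : (Fin d → Bool) × Ω =>
      ((Finset.univ.filter (fun j : Fin d => vhat p.2 j ≠ p.1 j)).card : ℝ≥0∞)) := by
    have heq : (fun p : (Fin d → Bool) × Ω =>
        ((Finset.univ.filter (fun j : Fin d => vhat p.2 j ≠ p.1 j)).card : ℝ≥0∞))
        = (fun q : (Fin d → Bool) × (Fin d → Bool) =>
            ((Finset.univ.filter (fun j : Fin d => q.2 j ≠ q.1 j)).card : ℝ≥0∞))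
          ∘ (fun p => (p.1, vhat p.2)) := rfl
    rw [heq]
    exact (measurable_of_countable _).comp (measurable_fst.prodMk (hvhat.comp measurable_snd))
  -- compute the integral
  have hint : (∫⁻ p : (Fin d → Bool) × Ω,
          ((Finset.univ.filter (fun j : Fin d => vhat p.2 j ≠ p.1 j)).card : ℝ≥0∞)
        ∂((2 ^ d : ℝ≥0∞)⁻¹ •
            ∑ v : Fin d → Bool, (Measure.dirac v).prod (P v)))
      = ∑ j : Fin d, (2 ^ d : ℝ≥0∞)⁻¹ * (Q j true (A j)ᶜ + Q j false (A j)) := by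
    rw [lintegral_smul_measure, lintegral_finset_sum_measure]
    have hv1 : ∀ v : Fin d → Bool,
        (∫⁻ p : (Fin d → Bool) × Ω,
          ((Finset.univ.filter (fun j : Fin d => vhat p.2 j ≠ p.1 j)).card : ℝ≥0∞)
          ∂(Measure.dirac v).prod (P v))
        = ∑ j : Fin d, P v {ω | vhat ω j ≠ v j} := by
      intro v
      haveI := hP v
      rw [Measure.dirac_prod, lintegral_map hF measurable_prodMk_left]
      have hfun : ∀ ω : Ω,
          ((Finset.univ.filter (fun j : Fin d => vhat ω j ≠ v j)).card : ℝ≥0∞)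
          = ∑ j : Fin d, if vhat ω j ≠ v j then (1 : ℝ≥0∞) else 0 := by
        intro ω
        rw [Finset.card_filter, Nat.cast_sum]
        congr 1
        ext j
        split <;> simp
      simp only [hfun]
      rw [lintegral_finset_sum]
      · refine Finset.sum_congr rfl fun j _ => ?_
        have hS : MeasurableSet {ω | vhat ω j ≠ v j} :=
          hvhat ((Set.to_countable _).measurableSet : MeasurableSet {u : Fin d → Bool | u j ≠ v j})
        rw [← lintegral_indicator_one hS]
        congr 1
        ext ω
        simp [Set.indicator_apply]
      · intro j _
        have hS : MeasurableSet {ω | vhat ω j ≠ v j} :=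
          hvhat ((Set.to_countable _).measurableSet : MeasurableSet {u : Fin d → Bool | u j ≠ v j})
        exact Measurable.ite hS measurable_const measurable_const
    simp only [hv1]
    rw [Finset.sum_comm, smul_eq_mul, Finset.mul_sum]
    refine Finset.sum_congr rfl fun j _ => ?_
    congr 1
    rw [← Finset.sum_filter_add_sum_filter_not Finset.univ (fun v : Fin d → Bool => v j = true)]
    congr 1
    · rw [hQ]
      simp only [Measure.finset_sum_apply]
      refine Finset.sum_congr rfl fun v hv => ?_
      simp only [Finset.mem_filter, Finset.mem_univ, true_and] at hv
      congr 1
      ext ω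
      simp [hA, hv]
    · rw [hQ]
      simp only [Bool.not_eq_true]
      simp only [Measure.finset_sum_apply]
      refine Finset.sum_congr rfl fun v hv => ?_
      simp only [Finset.mem_filter, Finset.mem_univ, true_and] at hv
      congr 1
      ext ω
      simp [hA, hv]
  rw [hint, Finset.mul_sum]
  refine le_trans (ofReal_sum_le' _ _) (Finset.sum_le_sum fun j _ => ?_)
  have haux := tv_aux ((2 ^ (d - 1) : ℝ≥0∞)⁻¹ • Q j true) ((2 ^ (d - 1) : ℝ≥0∞)⁻¹ • Q j false)
    (hQbar j true) (hQbar j false) (A j) (hAmeas j)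
  have h2inv : ENNReal.ofReal (1 / 2 : ℝ) = (2 : ℝ≥0∞)⁻¹ := by
    rw [show (1 / 2 : ℝ) = (2 : ℝ)⁻¹ by norm_num, ENNReal.ofReal_inv_of_pos (by norm_num),
      ENNReal.ofReal_ofNat]
  calc ENNReal.ofReal ((1 / 2) * (1 - tvDist ((2 ^ (d - 1) : ℝ≥0∞)⁻¹ • Q j true)
          ((2 ^ (d - 1) : ℝ≥0∞)⁻¹ • Q j false)))
      = (2 : ℝ≥0∞)⁻¹ * ENNReal.ofReal (1 - tvDist ((2 ^ (d - 1) : ℝ≥0∞)⁻¹ • Q j true)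
          ((2 ^ (d - 1) : ℝ≥0∞)⁻¹ • Q j false)) := by
        rw [ENNReal.ofReal_mul (by norm_num), h2inv]
    _ ≤ (2 : ℝ≥0∞)⁻¹ * (((2 ^ (d - 1) : ℝ≥0∞)⁻¹ • Q j true) (A j)ᶜ
          + ((2 ^ (d - 1) : ℝ≥0∞)⁻¹ • Q j false) (A j)) := by gcongr
    _ = (2 ^ d : ℝ≥0∞)⁻¹ * (Q j true (A j)ᶜ + Q j false (A j)) := by
        simp only [Measure.smul_apply, smul_eq_mul]
        rw [← mul_add, ← mul_assoc]
        congr 1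
        rw [show (2 : ℝ≥0∞) ^ d = 2 * 2 ^ (d - 1) by
          conv_lhs => rw [← Nat.sub_add_cancel hd, pow_succ, mul_comm]]
        rw [ENNReal.mul_inv (Or.inl (by norm_num)) (Or.inl (by norm_num))]
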